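/- Let T(x,y) = Σ_{n≥1} (Σ_{i≥1} c(n,i) y^i) x^n, viewed as a formal power series in x with coefficients in the polynomial ring ℤ[y]. Then (1 - (4 + 3y + y²)·x + (3 - 7y + 3y² + y³)·x²) · T(x,y) = 2y(1 + 3y)·x - 2y(3 - 7y + 4y²)·x². Equivalently, T(x,y) equals the rational function 2xy(1 + 3y - x(3 - 7y + 4y²)) / (1 - x(4 + 3y + y²) + x²(3 - 7y + 3y² + y³)). -/

import Mathlib

open SimpleGraph Polynomial

/-- A 2-colored partition of a simple graph `G`: a partition of the vertex set into
nonempty parts, each inducing a connected subgraph, together with an assignment of one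
of two colors to each part such that distinct parts joined by an edge get different colors. -/
structure TwoColoredPartition {V : Type*} (G : SimpleGraph V) where
  parts : Set (Set V)
  nonempty : ∀ p ∈ parts, p.Nonempty
  covers : ∀ v : V, ∃ p, p ∈ parts ∧ v ∈ p
  disj : ∀ p ∈ parts, ∀ q ∈ parts, p ≠ q → Disjoint p q
  conn : ∀ p ∈ parts, (G.induce p).Connected
  color : parts → Fin 2
  proper : ∀ p q : parts, p ≠ q →
    (∃ v ∈ (p : Set V), ∃ w ∈ (q : Set V), G.Adj v w) → color p ≠ color q

/-- The size of a 2-colored partition: its number of parts. -/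
noncomputable def TwoColoredPartition.size {V : Type*} {G : SimpleGraph V}
    (T : TwoColoredPartition G) : ℕ :=
  T.parts.ncard

/-- `c n i` is the number of 2-colored partitions of `K₃ × Pₙ` of size `i`. -/
noncomputable def c (n i : ℕ) : ℕ :=
  Nat.card {T : TwoColoredPartition ((⊤ : SimpleGraph (Fin 3)) □ pathGraph n) // T.size = i}

/-- `tpoly n = ∑_{i ≥ 1} c(n,i) yⁱ ∈ ℤ[y]`. -/
noncomputable def tpoly (n : ℕ) : Polynomial ℤ :=
  ∑ᶠ (i : ℕ) (_ : 1 ≤ i), Polynomial.monomial i (c n i : ℤ)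

/-- `T(x,y) = ∑_{n ≥ 1} (∑_{i ≥ 1} c(n,i) yⁱ) xⁿ`, a formal power series in `x`
with coefficients in `ℤ[y]`. -/
noncomputable def Tser : PowerSeries (Polynomial ℤ) :=
  PowerSeries.mk fun n => if n = 0 then 0 else tpoly n

namespace K3P

variable {V : Type*} (G : SimpleGraph V)

/-- Reachability within a vertex set `A`. -/
def Reach (A : Set V) (v w : V) : Prop :=
  ∃ p : G.Walk v w, ∀ x ∈ p.support, x ∈ A

variable {G}

lemma Reach.mem_left {A : Set V} {v w : V} (h : Reach G A v w) : v ∈ A := by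
  obtain ⟨p, hp⟩ := h; exact hp _ p.start_mem_support

lemma Reach.mem_right {A : Set V} {v w : V} (h : Reach G A v w) : w ∈ A := by
  obtain ⟨p, hp⟩ := h; exact hp _ p.end_mem_support

lemma Reach.refl {A : Set V} {v : V} (hv : v ∈ A) : Reach G A v v :=
  ⟨SimpleGraph.Walk.nil, by simp [hv]⟩

lemma Reach.symm {A : Set V} {v w : V} (h : Reach G A v w) : Reach G A w v := by
  obtain ⟨p, hp⟩ := h
  exact ⟨p.reverse, by simpa using hp⟩

lemma Reach.trans {A : Set V} {u v w : V} (h : Reach G A u v) (h' : Reach G A v w) :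
    Reach G A u w := by
  obtain ⟨p, hp⟩ := h; obtain ⟨q, hq⟩ := h'
  refine ⟨p.append q, fun x hx => ?_⟩
  rcases (SimpleGraph.Walk.mem_support_append_iff _ _).1 hx with h | h
  · exact hp _ h
  · exact hq _ h

lemma Reach.single {A : Set V} {v w : V} (hv : v ∈ A) (hw : w ∈ A) (h : G.Adj v w) :
    Reach G A v w := by
  refine ⟨h.toWalk, fun x hx => ?_⟩
  simp only [SimpleGraph.Walk.support_cons, SimpleGraph.Walk.support_nil,
    List.mem_cons, List.mem_singleton] at hx
  rcases hx with h1 | h1 | h1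
  · subst h1; assumption
  · subst h1; assumption
  · simp at h1

variable (G) in
/-- The piece (connected component within `A`) of `v`. -/
def piece (A : Set V) (v : V) : Set V := {w | Reach G A v w}

lemma piece_subset {A : Set V} {v : V} : piece G A v ⊆ A := fun _ h => h.mem_right

lemma mem_piece_self {A : Set V} {v : V} (hv : v ∈ A) : v ∈ piece G A v := Reach.refl hv

lemma piece_eq_of_mem {A : Set V} {v w : V} (h : w ∈ piece G A v) :
    piece G A w = piece G A v := by
  ext x
  exact ⟨fun hx => (h : Reach G A v w).trans hx, fun hx => (h : Reach G A v w).symm.trans hx⟩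

lemma reachable_induce_of_walk {S : Set V} {v w : V} (p : G.Walk v w)
    (hp : ∀ x ∈ p.support, x ∈ S) :
    (G.induce S).Reachable ⟨v, hp _ p.start_mem_support⟩ ⟨w, hp _ p.end_mem_support⟩ := by
  induction p with
  | nil => rfl
  | cons h q ih =>
    rename_i a b c
    have hb : ∀ x ∈ q.support, x ∈ S := fun x hx => hp x (by simp [hx])
    refine SimpleGraph.Reachable.trans ?_ (ih hb)
    exact SimpleGraph.Adj.reachable (by simpa using h)

lemma reach_of_reachable_induce {S : Set V} {v w : V} (hv : v ∈ S) (hw : w ∈ S)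
    (h : (G.induce S).Reachable ⟨v, hv⟩ ⟨w, hw⟩) : Reach G S v w := by
  obtain ⟨p⟩ := h
  refine ⟨p.map (SimpleGraph.Embedding.induce S).toHom, fun x hx => ?_⟩
  replace hx : x ∈ (p.map (SimpleGraph.Embedding.induce S).toHom).support := hx
  rw [SimpleGraph.Walk.support_map, List.mem_map] at hx
  obtain ⟨y, _, rfl⟩ := hx
  exact y.2

lemma piece_connected {A : Set V} {v : V} (hv : v ∈ A) :
    (G.induce (piece G A v)).Connected := by
  rw [SimpleGraph.connected_iff]
  refine ⟨fun x y => ?_, ⟨⟨v, mem_piece_self hv⟩⟩⟩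
  obtain ⟨x, hx⟩ := x; obtain ⟨y, hy⟩ := y
  -- Reach A v x, Reach A v y; walk from x to y stays in piece
  have hxy : Reach G A x y := (hx : Reach G A v x).symm.trans hy
  obtain ⟨p, hp⟩ := hxy
  classical
  have hsup : ∀ z ∈ p.support, z ∈ piece G A v := by
    intro z hz
    have : Reach G A x z := ⟨p.takeUntil z hz, fun u hu => hp u (p.support_takeUntil_subset hz hu)⟩
    exact (hx : Reach G A v x).trans this
  have := reachable_induce_of_walk p hsup
  exact this

variable (G) in
def pieces (A : Set V) : Set (Set V) := {p | ∃ v ∈ A, p = piece G A v}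

variable (G) in
def CP (A : Set V) : Set (Set V) := pieces G A ∪ pieces G Aᶜ

end K3P

namespace K3P
variable {V : Type*} {G : SimpleGraph V}

lemma pieces_disjoint {A : Set V} {p q : Set V} (hp : p ∈ pieces G A) (hq : q ∈ pieces G A)
    (hne : p ≠ q) : Disjoint p q := by
  obtain ⟨v, hv, rfl⟩ := hp; obtain ⟨w, hw, rfl⟩ := hq
  rw [Set.disjoint_left]
  intro x hxp hxq
  exact hne (by rw [← piece_eq_of_mem hxp, piece_eq_of_mem hxq])

lemma pieces_subset {A : Set V} {p : Set V} (hp : p ∈ pieces G A) : p ⊆ A := by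
  obtain ⟨v, hv, rfl⟩ := hp; exact piece_subset

lemma pieces_nonempty {A : Set V} {p : Set V} (hp : p ∈ pieces G A) : p.Nonempty := by
  obtain ⟨v, hv, rfl⟩ := hp; exact ⟨v, mem_piece_self hv⟩

lemma not_adj_pieces {A : Set V} {p q : Set V} (hp : p ∈ pieces G A) (hq : q ∈ pieces G A)
    (hne : p ≠ q) {v w : V} (hv : v ∈ p) (hw : w ∈ q) : ¬ G.Adj v w := by
  intro hadj
  obtain ⟨a, ha, rfl⟩ := hp; obtain ⟨b, hb, rfl⟩ := hq
  have : w ∈ piece G A a :=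
    (hv : Reach G A a v).trans (Reach.single hv.mem_right hw.mem_right hadj)
  exact hne ((piece_eq_of_mem this).symm.trans (piece_eq_of_mem hw))

attribute [local instance] Classical.propDecidable

/-- The 2-colored partition associated to a set `A` (color 0 = pieces of `A`). -/
noncomputable def ofSet (G : SimpleGraph V) (A : Set V) : TwoColoredPartition G where
  parts := CP G A
  nonempty := fun p hp => by
    rcases hp with h | h
    exacts [pieces_nonempty h, pieces_nonempty h]
  covers := fun v => by
    by_cases hv : v ∈ A
    · exact ⟨piece G A v, Or.inl ⟨v, hv, rfl⟩, mem_piece_self hv⟩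
    · exact ⟨piece G Aᶜ v, Or.inr ⟨v, hv, rfl⟩, mem_piece_self hv⟩
  disj := fun p hp q hq hne => by
    rcases hp with h | h <;> rcases hq with h' | h'
    · exact pieces_disjoint h h' hne
    · exact Set.disjoint_of_subset (pieces_subset h) (pieces_subset h') disjoint_compl_right
    · exact Set.disjoint_of_subset (pieces_subset h) (pieces_subset h') disjoint_compl_left
    · exact pieces_disjoint h h' hne
  conn := fun p hp => by
    rcases hp with h | h <;> obtain ⟨v, hv, rfl⟩ := h
    exacts [piece_connected hv, piece_connected hv]
  color := fun p => if (p : Set V) ⊆ A then 0 else 1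
  proper := fun p q hne hadj => by
    obtain ⟨v, hv, w, hw, hadj⟩ := hadj
    have hne' : (p : Set V) ≠ q := fun h => hne (Subtype.ext h)
    have hp := p.2; have hq := q.2
    rcases hp with h | h <;> rcases hq with h' | h'
    · exact absurd hadj (not_adj_pieces h h' hne' hv hw)
    · rw [if_pos (pieces_subset h), if_neg
        (fun hs => (pieces_subset h' hw) (hs hw))]
      simp
    · rw [if_neg (fun hs => (pieces_subset h hv) (hs hv)), if_pos (pieces_subset h')]
      simp
    · exact absurd (hadj.symm) (not_adj_pieces h' h (Ne.symm hne') hw hv)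

/-- The set of color-0 vertices of a 2-colored partition. -/
def toSet (T : TwoColoredPartition G) : Set V :=
  {v | ∃ p, ∃ h : p ∈ T.parts, v ∈ p ∧ T.color ⟨p, h⟩ = 0}

end K3P

namespace K3P
variable {V : Type*} {G : SimpleGraph V}

attribute [local instance] Classical.propDecidable

lemma Reach.mono {A B : Set V} (hAB : A ⊆ B) {v w : V} (h : Reach G A v w) : Reach G B v w := by
  obtain ⟨p, hp⟩ := h; exact ⟨p, fun x hx => hAB (hp x hx)⟩

private lemma fin2_eq_one {c : Fin 2} (h : c ≠ 0) : c = 1 := by omega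

/-- The set of vertices of color `c`. -/
def colorSet (T : TwoColoredPartition G) (c : Fin 2) : Set V :=
  {v | ∃ p, ∃ h : p ∈ T.parts, v ∈ p ∧ T.color ⟨p, h⟩ = c}

lemma part_unique (T : TwoColoredPartition G) {p q : Set V} (hp : p ∈ T.parts)
    (hq : q ∈ T.parts) {v : V} (hvp : v ∈ p) (hvq : v ∈ q) : p = q := by
  by_contra hne
  exact Set.disjoint_left.1 (T.disj p hp q hq hne) hvp hvq

lemma toSet_eq_colorSet (T : TwoColoredPartition G) : toSet T = colorSet T 0 := rfl

lemma compl_colorSet (T : TwoColoredPartition G) : (colorSet T 0)ᶜ = colorSet T 1 := by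
  ext v
  simp only [Set.mem_compl_iff, colorSet, Set.mem_setOf_eq]
  constructor
  · intro hv
    obtain ⟨p, hp, hvp⟩ := T.covers v
    refine ⟨p, hp, hvp, fin2_eq_one fun h0 => hv ⟨p, hp, hvp, h0⟩⟩
  · rintro ⟨p, hp, hvp, hc⟩ ⟨q, hq, hvq, hc0⟩
    have heq := part_unique T hq hp hvq hvp
    subst heq
    have : (0 : Fin 2) = 1 := hc0.symm.trans hc
    exact absurd this (by decide)

lemma subset_colorSet (T : TwoColoredPartition G) {p : Set V} (hp : p ∈ T.parts) {c : Fin 2}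
    (hc : T.color ⟨p, hp⟩ = c) : p ⊆ colorSet T c := fun x hx => ⟨p, hp, hx, hc⟩

lemma walk_stays (T : TwoColoredPartition G) {c : Fin 2} {p : Set V} (hp : p ∈ T.parts)
    (hc : T.color ⟨p, hp⟩ = c) {v w : V} (q : G.Walk v w)
    (hsup : ∀ x ∈ q.support, x ∈ colorSet T c) (hv : v ∈ p) : w ∈ p := by
  induction q with
  | nil => exact hv
  | cons hadj q ih =>
    rename_i a b d
    obtain ⟨qb, hqb, hbmem, hqbc⟩ := hsup b (by simp)
    have hqbp : qb = p := by
      by_contra hne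
      refine T.proper ⟨p, hp⟩ ⟨qb, hqb⟩ (fun h => hne (congrArg Subtype.val h).symm)
        ⟨a, hv, b, hbmem, hadj⟩ ?_
      rw [hc, hqbc]
    exact ih (fun x hx => hsup x (by simp [hx])) (hqbp ▸ hbmem)

lemma part_eq_piece (T : TwoColoredPartition G) {c : Fin 2} {p : Set V} (hp : p ∈ T.parts)
    (hc : T.color ⟨p, hp⟩ = c) {v : V} (hv : v ∈ p) : p = piece G (colorSet T c) v := by
  ext w
  constructor
  · intro hw
    have hconn := T.conn p hp
    have hreach := hconn.preconnected ⟨v, hv⟩ ⟨w, hw⟩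
    exact (reach_of_reachable_induce hv hw hreach).mono (subset_colorSet T hp hc)
  · intro hw
    obtain ⟨q, hq⟩ := (hw : Reach G (colorSet T c) v w)
    exact walk_stays T hp hc q hq hv

lemma TCP_ext {T1 T2 : TwoColoredPartition G} (hp : T1.parts = T2.parts)
    (hc : ∀ (p) (h1 : p ∈ T1.parts) (h2 : p ∈ T2.parts),
      T1.color ⟨p, h1⟩ = T2.color ⟨p, h2⟩) : T1 = T2 := by
  cases T1; cases T2
  simp only at hp
  subst hp
  rename_i col1 pr1 n2 c2 d2 cn2 col2 pr2
  have hcol : col1 = col2 := funext fun x => hc x.1 x.2 x.2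
  subst hcol
  rfl

lemma ofSet_toSet (T : TwoColoredPartition G) : ofSet G (toSet T) = T := by
  have hparts : CP G (toSet T) = T.parts := by
    rw [toSet_eq_colorSet]
    ext p
    constructor
    · rintro (⟨v, hv, rfl⟩ | ⟨v, hv, rfl⟩)
      · obtain ⟨q, hq, hvq, hqc⟩ := hv
        rw [← part_eq_piece T hq hqc hvq]; exact hq
      · rw [compl_colorSet] at hv ⊢
        obtain ⟨q, hq, hvq, hqc⟩ := hv
        rw [← part_eq_piece T hq hqc hvq]; exact hq
    · intro hp
      rcases eq_or_ne (T.color ⟨p, hp⟩) 0 with hc | hc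
      · obtain ⟨v, hv⟩ := T.nonempty p hp
        exact Or.inl ⟨v, ⟨p, hp, hv, hc⟩, part_eq_piece T hp hc hv⟩
      · obtain ⟨v, hv⟩ := T.nonempty p hp
        have hc1 := fin2_eq_one hc
        refine Or.inr ?_
        rw [compl_colorSet]
        exact ⟨v, ⟨p, hp, hv, hc1⟩, part_eq_piece T hp hc1 hv⟩
  refine TCP_ext hparts ?_
  intro p h1 h2
  show (if p ⊆ toSet T then (0 : Fin 2) else 1) = _
  rw [toSet_eq_colorSet]
  rcases eq_or_ne (T.color ⟨p, h2⟩) 0 with hc | hc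
  · rw [if_pos (subset_colorSet T h2 hc), hc]
  · have hc1 := fin2_eq_one hc
    rw [if_neg, hc1]
    intro hsub
    obtain ⟨v, hv⟩ := T.nonempty p h2
    have h0 : v ∈ colorSet T 0 := hsub hv
    have h1' : v ∈ colorSet T 1 := subset_colorSet T h2 hc1 hv
    rw [← compl_colorSet] at h1'
    exact h1' h0

lemma toSet_ofSet (A : Set V) : toSet (ofSet G A) = A := by
  ext v
  constructor
  · rintro ⟨p, hp, hvp, hc⟩
    have hsub : p ⊆ A := by
      by_contra hns
      rw [show (ofSet G A).color ⟨p, hp⟩ = (if p ⊆ A then 0 else 1) from rfl,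
        if_neg hns] at hc
      exact absurd hc (by decide)
    exact hsub hvp
  · intro hv
    refine ⟨piece G A v, Or.inl ⟨v, hv, rfl⟩, mem_piece_self hv, ?_⟩
    show (if piece G A v ⊆ A then (0 : Fin 2) else 1) = 0
    rw [if_pos piece_subset]

/-- The main equivalence: 2-colored partitions of `G` correspond to subsets of `V`. -/
noncomputable def tcpEquiv (G : SimpleGraph V) : TwoColoredPartition G ≃ Set V where
  toFun := toSet
  invFun := ofSet G
  left_inv := ofSet_toSet
  right_inv := toSet_ofSet

lemma size_eq (T : TwoColoredPartition G) : T.size = (CP G (toSet T)).ncard := by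
  conv_lhs => rw [← ofSet_toSet T]
  rfl

end K3P

namespace K3P
section Concrete
variable {n : ℕ}

abbrev Gn (n : ℕ) : SimpleGraph (Fin 3 × Fin n) := (⊤ : SimpleGraph (Fin 3)) □ pathGraph n

/-- The set of vertices determined by a layer sequence. -/
def lset (f : Fin n → Finset (Fin 3)) : Set (Fin 3 × Fin n) := {x | x.1 ∈ f x.2}

def pre (t : Fin n) : Fin n := ⟨t.val - 1, lt_of_le_of_lt (Nat.sub_le _ _) t.2⟩

/-- `t` is a "start layer" for the sequence `f`. -/
def good (f : Fin n → Finset (Fin 3)) (t : Fin n) : Prop :=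
  f t ≠ ∅ ∧ ((t : ℕ) ≠ 0 → f t ∩ f (pre t) = ∅)

instance (f : Fin n → Finset (Fin 3)) : DecidablePred (good f) := fun _ =>
  instDecidableAnd

lemma adj_layer {a b : Fin 3} {t : Fin n} (h : a ≠ b) : (Gn n).Adj (a, t) (b, t) :=
  Or.inl ⟨h, rfl⟩

lemma adj_vert {a : Fin 3} {t t' : Fin n} (h : (t : ℕ) + 1 = (t' : ℕ)) :
    (Gn n).Adj (a, t) (a, t') :=
  Or.inr ⟨SimpleGraph.pathGraph_adj.2 (Or.inl h), rfl⟩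

lemma reach_layer {f : Fin n → Finset (Fin 3)} {a b : Fin 3} {t : Fin n}
    (ha : a ∈ f t) (hb : b ∈ f t) : Reach (Gn n) (lset f) (a, t) (b, t) := by
  rcases eq_or_ne a b with rfl | h
  · exact Reach.refl ha
  · exact Reach.single ha hb (adj_layer h)

lemma reach_vert {f : Fin n → Finset (Fin 3)} {a : Fin 3} {t t' : Fin n}
    (ha : a ∈ f t) (ha' : a ∈ f t') (h : (t : ℕ) + 1 = (t' : ℕ)) :
    Reach (Gn n) (lset f) (a, t) (a, t') :=
  Reach.single ha ha' (adj_vert h)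

lemma crossing {f : Fin n → Finset (Fin 3)} :
    ∀ {u w : Fin 3 × Fin n} (p : (Gn n).Walk u w), (∀ x ∈ p.support, x ∈ lset f) →
    ∀ k : ℕ, (u.2 : ℕ) < k → k ≤ (w.2 : ℕ) →
    ∃ (t t' : Fin n) (b : Fin 3), (t : ℕ) + 1 = (t' : ℕ) ∧ (t' : ℕ) = k ∧
      b ∈ f t ∧ b ∈ f t' := by
  intro u w p
  induction p with
  | nil => intro _ k h1 h2; omega
  | cons hadj q ih =>
    rename_i a b d
    intro hsup k h1 h2
    by_cases hb : (b.2 : ℕ) < k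
    · exact ih (fun x hx => hsup x (by simp [hx])) k hb h2
    · push_neg at hb
      rcases hadj with ⟨_, heq⟩ | ⟨hpath, heq⟩
      · rw [heq] at h1; omega
      · rcases SimpleGraph.pathGraph_adj.1 hpath with h | h
        · have hk : (b.2 : ℕ) = k := by omega
          refine ⟨a.2, b.2, a.1, h, hk, ?_, ?_⟩
          · exact hsup a (by simp)
          · have hbA := hsup b (by exact List.mem_cons_of_mem _ q.start_mem_support)
            rwa [lset, Set.mem_setOf_eq, ← heq] at hbA
        · omega

lemma pieces_ncard (f : Fin n → Finset (Fin 3)) :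
    (pieces (Gn n) (lset f)).ncard = (Finset.univ.filter (good f)).card := by
  classical
  set A := lset f with hA
  -- the map from good layers to pieces
  have hpick : ∀ {t : Fin n}, good f t → ∃ a, a ∈ f t := fun h =>
    Finset.nonempty_iff_ne_empty.2 h.1
  let pk : {t : Fin n // good f t} → Fin 3 := fun t => (hpick t.2).choose
  have hpk : ∀ t : {t : Fin n // good f t}, pk t ∈ f t.1 := fun t => (hpick t.2).choose_spec
  let g : {t : Fin n // good f t} → Set (Fin 3 × Fin n) := fun t => piece (Gn n) A (pk t, t.1)
  have hgmem : ∀ t, g t ∈ pieces (Gn n) A := fun t => ⟨(pk t, t.1), hpk t, rfl⟩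
  -- injectivity helper
  have hlt : ∀ s t : {t : Fin n // good f t}, (s.1 : ℕ) < (t.1 : ℕ) → g s ≠ g t := by
    intro s t hst heq
    have h1 : (pk t, t.1) ∈ g t := mem_piece_self (hpk t)
    rw [← heq] at h1
    obtain ⟨p, hp⟩ := (h1 : Reach (Gn n) A (pk s, s.1) (pk t, t.1))
    obtain ⟨t1, t1', b, hsucc, hval, hb1, hb2⟩ :=
      crossing p hp (t.1 : ℕ) hst le_rfl
    have ht1' : t1' = t.1 := Fin.ext hval
    have ht1 : t1 = pre t.1 := Fin.ext (by simp only [pre]; omega)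
    have hint := t.2.2 (by omega)
    rw [ht1'] at hb2; rw [ht1] at hb1
    exact Finset.notMem_empty b (hint ▸ Finset.mem_inter.2 ⟨hb2, hb1⟩)
  have hinj : Function.Injective g := by
    intro s t heq
    rcases lt_trichotomy (s.1 : ℕ) (t.1 : ℕ) with h | h | h
    · exact absurd heq (hlt s t h)
    · exact Subtype.ext (Fin.ext h)
    · exact absurd heq.symm (hlt t s h)
  have hsurj : ∀ q ∈ pieces (Gn n) A, ∃ t, g t = q := by
    rintro q ⟨v, hv, rfl⟩
    -- minimal layer in the piece
    have hP : ∃ k, ∃ x : Fin 3 × Fin n, (x.2 : ℕ) = k ∧ x ∈ piece (Gn n) A v :=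
      ⟨(v.2 : ℕ), v, rfl, mem_piece_self hv⟩
    classical
    let k0 := Nat.find hP
    obtain ⟨x0, hx0val, hx0⟩ := Nat.find_spec hP
    have hx0A : x0 ∈ A := piece_subset hx0
    have hx0f : x0.1 ∈ f x0.2 := hx0A
    have hgood : good f x0.2 := by
      constructor
      · exact Finset.ne_empty_of_mem hx0f
      · intro hne
        by_contra hint
        obtain ⟨b, hb⟩ := Finset.nonempty_iff_ne_empty.2 hint
        rw [Finset.mem_inter] at hb
        have hbt : (b, x0.2) ∈ piece (Gn n) A v :=
          (hx0 : Reach (Gn n) A v x0).trans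
            (by simpa using reach_layer (f := f) hx0f hb.1)
        have hprev : (b, pre x0.2) ∈ piece (Gn n) A v := by
          refine (hbt : Reach (Gn n) A v _).trans ?_
          exact (reach_vert (f := f) hb.2 hb.1 (by simp only [pre]; omega)).symm
        have := Nat.find_min hP (m := ((pre x0.2 : Fin n) : ℕ))
          (by simp only [pre, hx0val, k0]; omega)
        exact this ⟨(b, pre x0.2), rfl, hprev⟩
    refine ⟨⟨x0.2, hgood⟩, ?_⟩
    have hmem : (pk ⟨x0.2, hgood⟩, x0.2) ∈ piece (Gn n) A v :=
      (hx0 : Reach (Gn n) A v x0).trans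
        (by simpa using reach_layer (f := f) hx0f (hpk ⟨x0.2, hgood⟩))
    exact piece_eq_of_mem hmem
  -- assemble the bijection
  have hbij : Function.Bijective
      (fun t => (⟨g t, hgmem t⟩ : pieces (Gn n) A)) := by
    constructor
    · intro s t h
      exact hinj (congrArg Subtype.val h)
    · rintro ⟨q, hq⟩
      obtain ⟨t, ht⟩ := hsurj q hq
      exact ⟨t, Subtype.ext ht⟩
  rw [← Nat.card_coe_set_eq, ← Nat.card_congr (Equiv.ofBijective _ hbij),
    Nat.card_eq_fintype_card, Fintype.card_subtype]

end Concrete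
end K3P

namespace K3P
section Count
variable {n : ℕ}

/-- Total number of parts determined by a layer sequence. -/
def N (f : Fin n → Finset (Fin 3)) : ℕ :=
  (Finset.univ.filter (good f)).card +
    (Finset.univ.filter (good (fun t => (f t)ᶜ))).card

lemma compl_lset (f : Fin n → Finset (Fin 3)) :
    (lset f)ᶜ = lset (fun t => (f t)ᶜ) := by
  ext x; simp [lset]

lemma CP_ncard (f : Fin n → Finset (Fin 3)) : (CP (Gn n) (lset f)).ncard = N f := by
  have hdisj : Disjoint (pieces (Gn n) (lset f)) (pieces (Gn n) (lset f)ᶜ) := by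
    rw [Set.disjoint_left]
    intro p hp hq
    obtain ⟨v, hv⟩ := pieces_nonempty hp
    exact (pieces_subset hq hv) (pieces_subset hp hv)
  rw [CP, Set.ncard_union_eq hdisj (Set.toFinite _) (Set.toFinite _), pieces_ncard,
    compl_lset, pieces_ncard]
  rfl

noncomputable def seqEquiv (n : ℕ) : (Fin n → Finset (Fin 3)) ≃ Set (Fin 3 × Fin n) where
  toFun := lset
  invFun A := by
    classical
    exact fun t => Finset.univ.filter (fun a => (a, t) ∈ A)
  left_inv f := by
    funext t; ext a; simp only [Finset.mem_filter, Finset.mem_univ, true_and]; exact Iff.rfl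
  right_inv A := by
    ext ⟨a, t⟩; simp [lset]

lemma c_eq (n i : ℕ) : c n i = Nat.card {f : Fin n → Finset (Fin 3) // N f = i} := by
  rw [_root_.c]
  refine Nat.card_congr (Equiv.subtypeEquiv
    ((tcpEquiv (Gn n)).trans (seqEquiv n).symm) fun T => ?_)
  have hls : lset ((seqEquiv n).symm (toSet T)) = toSet T := (seqEquiv n).right_inv _
  rw [size_eq, show (CP (Gn n) (toSet T)) = CP (Gn n) (lset ((seqEquiv n).symm (toSet T)))
    from by rw [hls], CP_ncard]
  rfl

end Count
end K3P

namespace K3P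
section Tpoly
open Finset Polynomial

lemma c_card (n i : ℕ) :
    c n i = (Finset.univ.filter (fun f : Fin n → Finset (Fin 3) => N f = i)).card := by
  rw [c_eq, Nat.card_eq_fintype_card, Fintype.card_subtype]

lemma N_pos {m : ℕ} (f : Fin (m + 1) → Finset (Fin 3)) : 1 ≤ N f := by
  rcases eq_or_ne (f 0) ∅ with h | h
  · have hg : good (fun t => (f t)ᶜ) 0 := by
      refine ⟨?_, fun h0 => absurd rfl h0⟩
      show (f 0)ᶜ ≠ ∅
      rw [h]
      exact Finset.ne_empty_of_mem (a := 0) (by simp)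
    have : (Finset.univ.filter (good (fun t : Fin (m+1) => (f t)ᶜ))).Nonempty :=
      ⟨0, Finset.mem_filter.2 ⟨Finset.mem_univ _, hg⟩⟩
    have := Finset.card_pos.2 this
    unfold N; omega
  · have hg : good f 0 := ⟨h, fun h0 => absurd rfl h0⟩
    have : (Finset.univ.filter (good f)).Nonempty :=
      ⟨0, Finset.mem_filter.2 ⟨Finset.mem_univ _, hg⟩⟩
    have := Finset.card_pos.2 this
    unfold N; omega

lemma N_le {n : ℕ} (f : Fin n → Finset (Fin 3)) : N f ≤ 2 * n := by
  have h1 := Finset.card_filter_le (Finset.univ : Finset (Fin n)) (good f)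
  have h2 := Finset.card_filter_le (Finset.univ : Finset (Fin n))
    (good (fun t => (f t)ᶜ))
  simp only [Finset.card_univ, Fintype.card_fin] at h1 h2
  unfold N; omega

lemma tpoly_eq_sum {m : ℕ} :
    tpoly (m + 1) = ∑ f : Fin (m + 1) → Finset (Fin 3), (X : Polynomial ℤ) ^ (N f) := by
  classical
  set n := m + 1
  have h1 : tpoly n = ∑ i ∈ Finset.Icc 1 (2 * n), Polynomial.monomial i (c n i : ℤ) := by
    rw [tpoly]
    refine finsum_cond_eq_sum_of_cond_iff _ ?_
    intro i hi
    have hc : c n i ≠ 0 := by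
      intro h; rw [h] at hi; simp at hi
    rw [c_card] at hc
    obtain ⟨f, hf⟩ : ∃ f : Fin n → Finset (Fin 3), N f = i := by
      rcases Finset.card_pos.1 (Nat.pos_of_ne_zero hc) with ⟨f, hf⟩
      exact ⟨f, (Finset.mem_filter.1 hf).2⟩
    subst hf
    simp only [Finset.mem_Icc]
    constructor
    · intro hge; exact ⟨hge, N_le f⟩
    · intro hmem; exact hmem.1
  rw [h1, ← Finset.sum_fiberwise_of_maps_to
    (g := N) (fun f _ => Finset.mem_Icc.2 ⟨N_pos f, N_le f⟩)
    (fun f => (X : Polynomial ℤ) ^ (N f))]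
  refine Finset.sum_congr rfl fun i _ => ?_
  rw [Finset.sum_congr rfl (fun f hf => by
    rw [(Finset.mem_filter.1 hf).2]), Finset.sum_const, c_card, nsmul_eq_mul]
  rw [← Polynomial.C_mul_X_pow_eq_monomial]
  norm_cast

end Tpoly
end K3P

namespace K3P
section Transfer
open Polynomial

def w2 (s T : Finset (Fin 3)) : ℕ :=
  (if T ≠ ∅ ∧ T ∩ s = ∅ then 1 else 0) + (if Tᶜ ≠ ∅ ∧ Tᶜ ∩ sᶜ = ∅ then 1 else 0)

def w0 (T : Finset (Fin 3)) : ℕ :=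
  (if T ≠ ∅ then 1 else 0) + (if Tᶜ ≠ ∅ then 1 else 0)

noncomputable def F : ℕ → Finset (Fin 3) → Polynomial ℤ
  | 0, _ => 1
  | (m+1), s => ∑ T : Finset (Fin 3), (X : Polynomial ℤ) ^ (w2 s T) * F m T

lemma sum_S3 {M : Type*} [AddCommMonoid M] (g : Finset (Fin 3) → M) :
    ∑ T : Finset (Fin 3), g T =
      g ∅ + g {0} + g {1} + g {2} + g {0,1} + g {0,2} + g {1,2} + g {0,1,2} := by
  rw [show (Finset.univ : Finset (Finset (Fin 3))) =
    {∅, {0}, {1}, {2}, {0,1}, {0,2}, {1,2}, {0,1,2}} from by decide]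
  rw [Finset.sum_insert (by decide), Finset.sum_insert (by decide),
    Finset.sum_insert (by decide), Finset.sum_insert (by decide),
    Finset.sum_insert (by decide), Finset.sum_insert (by decide),
    Finset.sum_insert (by decide), Finset.sum_singleton]
  abel

def pv {m : ℕ} (s : Finset (Fin 3)) (g : Fin m → Finset (Fin 3)) (t : Fin m) :
    Finset (Fin 3) :=
  if (t : ℕ) = 0 then s else g ⟨(t : ℕ) - 1, lt_of_le_of_lt (Nat.sub_le _ _) t.2⟩

def wt {m : ℕ} (s : Finset (Fin 3)) (g : Fin m → Finset (Fin 3)) : ℕ :=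
  ∑ t, w2 (pv s g t) (g t)

lemma cons_mk_succ {m : ℕ} (T : Finset (Fin 3)) (g : Fin m → Finset (Fin 3))
    (j : ℕ) (h : j + 1 < m + 1) :
    (Fin.cons T g : Fin (m+1) → Finset (Fin 3)) ⟨j+1, h⟩ = g ⟨j, Nat.lt_of_succ_lt_succ h⟩ := by
  have : (⟨j+1, h⟩ : Fin (m+1)) = Fin.succ ⟨j, Nat.lt_of_succ_lt_succ h⟩ := rfl
  rw [this, Fin.cons_succ]

lemma pv_cons {m : ℕ} (s T : Finset (Fin 3)) (g : Fin m → Finset (Fin 3)) (u : Fin m) :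
    pv s (Fin.cons T g) u.succ = pv T g u := by
  rcases u with ⟨uv, hu⟩
  rcases Nat.eq_zero_or_pos uv with rfl | hpos
  · simp [pv]
  · obtain ⟨j, rfl⟩ := Nat.exists_eq_succ_of_ne_zero (Nat.pos_iff_ne_zero.1 hpos)
    simp only [pv, Fin.val_succ, if_neg (by omega : ¬(j + 1 + 1 = 0)),
      if_neg (by omega : ¬(j + 1 = 0))]
    exact cons_mk_succ T g j (by omega)

lemma wt_cons {m : ℕ} (s T : Finset (Fin 3)) (g : Fin m → Finset (Fin 3)) :
    wt s (Fin.cons T g) = w2 s T + wt T g := by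
  rw [wt, Fin.sum_univ_succ]
  have h0 : w2 (pv s (Fin.cons T g) 0) ((Fin.cons T g : Fin (m+1) → Finset (Fin 3)) 0)
      = w2 s T := by simp [pv]
  have hs : ∀ u : Fin m, w2 (pv s (Fin.cons T g) u.succ)
      ((Fin.cons T g : Fin (m+1) → Finset (Fin 3)) u.succ)
      = w2 (pv T g u) (g u) := fun u => by rw [pv_cons, Fin.cons_succ]
  rw [h0, Finset.sum_congr rfl (fun u _ => hs u)]
  rfl

lemma F_sum : ∀ (m : ℕ) (s : Finset (Fin 3)),
    F m s = ∑ g : Fin m → Finset (Fin 3), (X : Polynomial ℤ) ^ (wt s g) := by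
  intro m
  induction m with
  | zero =>
    intro s
    rw [show F 0 s = 1 from rfl]
    simp [wt]
  | succ m ih =>
    intro s
    rw [show F (m+1) s = ∑ T : Finset (Fin 3), (X : Polynomial ℤ) ^ (w2 s T) * F m T from rfl]
    rw [← Equiv.sum_comp (Fin.consEquiv (fun _ : Fin (m+1) => Finset (Fin 3)))
      (fun g => (X : Polynomial ℤ) ^ (wt s g)), Fintype.sum_prod_type]
    refine Finset.sum_congr rfl fun T _ => ?_
    rw [ih T, Finset.mul_sum]
    refine Finset.sum_congr rfl fun g _ => ?_
    show (X : Polynomial ℤ) ^ (w2 s T) * X ^ (wt T g) = X ^ (wt s (Fin.cons T g))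
    rw [wt_cons, pow_add]

end Transfer
end K3P

namespace K3P
section Link
open Polynomial

lemma N_eq_sum {n : ℕ} (f : Fin n → Finset (Fin 3)) :
    N f = ∑ t : Fin n, ((if good f t then 1 else 0) +
      (if good (fun u => (f u)ᶜ) t then 1 else 0)) := by
  rw [N, Finset.card_filter, Finset.card_filter, ← Finset.sum_add_distrib]

lemma ind_eq {n : ℕ} (f : Fin n → Finset (Fin 3)) (t : Fin n) :
    ((if good f t then 1 else 0) + (if good (fun u => (f u)ᶜ) t then 1 else 0) : ℕ) =
      if (t : ℕ) = 0 then w0 (f t) else w2 (f (pre t)) (f t) := by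
  by_cases h0 : (t : ℕ) = 0
  · rw [if_pos h0, w0]
    congr 1
    · exact if_congr (by simp [good, h0]) rfl rfl
    · exact if_congr (by simp [good, h0]) rfl rfl
  · rw [if_neg h0, w2]
    congr 1
    · exact if_congr (by simp [good, h0]) rfl rfl
    · exact if_congr (by simp [good, h0]) rfl rfl

lemma cons_pre_succ {m : ℕ} (T : Finset (Fin 3)) (g : Fin m → Finset (Fin 3)) (u : Fin m) :
    (Fin.cons T g : Fin (m+1) → Finset (Fin 3)) (pre u.succ) = pv T g u := by
  rcases u with ⟨uv, hu⟩
  rcases Nat.eq_zero_or_pos uv with rfl | hpos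
  · simp [pre, pv]
  · obtain ⟨j, rfl⟩ := Nat.exists_eq_succ_of_ne_zero (Nat.pos_iff_ne_zero.1 hpos)
    simp only [pre, pv, Fin.val_succ, if_neg (by omega : ¬(j + 1 = 0))]
    exact cons_mk_succ T g j (by omega)

lemma N_cons {m : ℕ} (T : Finset (Fin 3)) (g : Fin m → Finset (Fin 3)) :
    N (Fin.cons T g) = w0 T + wt T g := by
  have hterm : ∀ u : Fin m,
      (if ((u.succ : Fin (m+1)) : ℕ) = 0
        then w0 ((Fin.cons T g : Fin (m+1) → Finset (Fin 3)) u.succ)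
        else w2 ((Fin.cons T g : Fin (m+1) → Finset (Fin 3)) (pre u.succ))
          ((Fin.cons T g : Fin (m+1) → Finset (Fin 3)) u.succ)) = w2 (pv T g u) (g u) := by
    intro u
    rw [if_neg (by simp), Fin.cons_succ, cons_pre_succ]
  rw [N_eq_sum, Finset.sum_congr rfl (fun t _ => ind_eq _ t), Fin.sum_univ_succ,
    if_pos (show ((0 : Fin (m+1)) : ℕ) = 0 from rfl), Fin.cons_zero, Finset.sum_congr rfl (fun u _ => hterm u), wt]

lemma tpoly_F (m : ℕ) :
    tpoly (m+1) = ∑ T : Finset (Fin 3), (X : Polynomial ℤ) ^ (w0 T) * F m T := by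
  rw [tpoly_eq_sum]
  rw [← Equiv.sum_comp (Fin.consEquiv (fun _ : Fin (m+1) => Finset (Fin 3)))
    (fun f => (X : Polynomial ℤ) ^ (N f)), Fintype.sum_prod_type]
  refine Finset.sum_congr rfl fun T _ => ?_
  rw [F_sum, Finset.mul_sum]
  refine Finset.sum_congr rfl fun g _ => ?_
  show (X : Polynomial ℤ) ^ (N (Fin.cons T g)) = _
  rw [N_cons, pow_add]

end Link
end K3P

namespace K3P
section Final
open Polynomial

noncomputable def AP : Polynomial ℤ := 4 + 3 * X + X ^ 2
noncomputable def BP : Polynomial ℤ := 3 - 7 * X + 3 * X ^ 2 + X ^ 3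

lemma Fbase (s : Finset (Fin 3)) : F 2 s = AP * F 1 s - BP * F 0 s := by
  have hs : s ∈ (Finset.univ : Finset (Finset (Fin 3))) := Finset.mem_univ s
  rw [show (Finset.univ : Finset (Finset (Fin 3))) =
    {∅, {0}, {1}, {2}, {0,1}, {0,2}, {1,2}, {0,1,2}} from by decide] at hs
  simp only [Finset.mem_insert, Finset.mem_singleton] at hs
  rcases hs with rfl|rfl|rfl|rfl|rfl|rfl|rfl|rfl <;>
  · simp only [F, sum_S3, AP, BP,
    show w2 (∅ : Finset (Fin 3)) ∅ = 0 from by decide,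
    show w2 (∅ : Finset (Fin 3)) {0} = 1 from by decide,
    show w2 (∅ : Finset (Fin 3)) {1} = 1 from by decide,
    show w2 (∅ : Finset (Fin 3)) {2} = 1 from by decide,
    show w2 (∅ : Finset (Fin 3)) {0,1} = 1 from by decide,
    show w2 (∅ : Finset (Fin 3)) {0,2} = 1 from by decide,
    show w2 (∅ : Finset (Fin 3)) {1,2} = 1 from by decide,
    show w2 (∅ : Finset (Fin 3)) {0,1,2} = 1 from by decide,
    show w2 ({0} : Finset (Fin 3)) ∅ = 0 from by decide,
    show w2 ({0} : Finset (Fin 3)) {0} = 0 from by decide,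
    show w2 ({0} : Finset (Fin 3)) {1} = 1 from by decide,
    show w2 ({0} : Finset (Fin 3)) {2} = 1 from by decide,
    show w2 ({0} : Finset (Fin 3)) {0,1} = 0 from by decide,
    show w2 ({0} : Finset (Fin 3)) {0,2} = 0 from by decide,
    show w2 ({0} : Finset (Fin 3)) {1,2} = 2 from by decide,
    show w2 ({0} : Finset (Fin 3)) {0,1,2} = 0 from by decide,
    show w2 ({1} : Finset (Fin 3)) ∅ = 0 from by decide,
    show w2 ({1} : Finset (Fin 3)) {0} = 1 from by decide,
    show w2 ({1} : Finset (Fin 3)) {1} = 0 from by decide,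
    show w2 ({1} : Finset (Fin 3)) {2} = 1 from by decide,
    show w2 ({1} : Finset (Fin 3)) {0,1} = 0 from by decide,
    show w2 ({1} : Finset (Fin 3)) {0,2} = 2 from by decide,
    show w2 ({1} : Finset (Fin 3)) {1,2} = 0 from by decide,
    show w2 ({1} : Finset (Fin 3)) {0,1,2} = 0 from by decide,
    show w2 ({2} : Finset (Fin 3)) ∅ = 0 from by decide,
    show w2 ({2} : Finset (Fin 3)) {0} = 1 from by decide,
    show w2 ({2} : Finset (Fin 3)) {1} = 1 from by decide,
    show w2 ({2} : Finset (Fin 3)) {2} = 0 from by decide,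
    show w2 ({2} : Finset (Fin 3)) {0,1} = 2 from by decide,
    show w2 ({2} : Finset (Fin 3)) {0,2} = 0 from by decide,
    show w2 ({2} : Finset (Fin 3)) {1,2} = 0 from by decide,
    show w2 ({2} : Finset (Fin 3)) {0,1,2} = 0 from by decide,
    show w2 ({0,1} : Finset (Fin 3)) ∅ = 0 from by decide,
    show w2 ({0,1} : Finset (Fin 3)) {0} = 0 from by decide,
    show w2 ({0,1} : Finset (Fin 3)) {1} = 0 from by decide,
    show w2 ({0,1} : Finset (Fin 3)) {2} = 2 from by decide,
    show w2 ({0,1} : Finset (Fin 3)) {0,1} = 0 from by decide,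
    show w2 ({0,1} : Finset (Fin 3)) {0,2} = 1 from by decide,
    show w2 ({0,1} : Finset (Fin 3)) {1,2} = 1 from by decide,
    show w2 ({0,1} : Finset (Fin 3)) {0,1,2} = 0 from by decide,
    show w2 ({0,2} : Finset (Fin 3)) ∅ = 0 from by decide,
    show w2 ({0,2} : Finset (Fin 3)) {0} = 0 from by decide,
    show w2 ({0,2} : Finset (Fin 3)) {1} = 2 from by decide,
    show w2 ({0,2} : Finset (Fin 3)) {2} = 0 from by decide,
    show w2 ({0,2} : Finset (Fin 3)) {0,1} = 1 from by decide,
    show w2 ({0,2} : Finset (Fin 3)) {0,2} = 0 from by decide,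
    show w2 ({0,2} : Finset (Fin 3)) {1,2} = 1 from by decide,
    show w2 ({0,2} : Finset (Fin 3)) {0,1,2} = 0 from by decide,
    show w2 ({1,2} : Finset (Fin 3)) ∅ = 0 from by decide,
    show w2 ({1,2} : Finset (Fin 3)) {0} = 2 from by decide,
    show w2 ({1,2} : Finset (Fin 3)) {1} = 0 from by decide,
    show w2 ({1,2} : Finset (Fin 3)) {2} = 0 from by decide,
    show w2 ({1,2} : Finset (Fin 3)) {0,1} = 1 from by decide,
    show w2 ({1,2} : Finset (Fin 3)) {0,2} = 1 from by decide,
    show w2 ({1,2} : Finset (Fin 3)) {1,2} = 0 from by decide,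
    show w2 ({1,2} : Finset (Fin 3)) {0,1,2} = 0 from by decide,
    show w2 ({0,1,2} : Finset (Fin 3)) ∅ = 1 from by decide,
    show w2 ({0,1,2} : Finset (Fin 3)) {0} = 1 from by decide,
    show w2 ({0,1,2} : Finset (Fin 3)) {1} = 1 from by decide,
    show w2 ({0,1,2} : Finset (Fin 3)) {2} = 1 from by decide,
    show w2 ({0,1,2} : Finset (Fin 3)) {0,1} = 1 from by decide,
    show w2 ({0,1,2} : Finset (Fin 3)) {0,2} = 1 from by decide,
    show w2 ({0,1,2} : Finset (Fin 3)) {1,2} = 1 from by decide,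
    show w2 ({0,1,2} : Finset (Fin 3)) {0,1,2} = 0 from by decide,
    show w0 (∅ : Finset (Fin 3)) = 1 from by decide,
    show w0 ({0} : Finset (Fin 3)) = 2 from by decide,
    show w0 ({1} : Finset (Fin 3)) = 2 from by decide,
    show w0 ({2} : Finset (Fin 3)) = 2 from by decide,
    show w0 ({0,1} : Finset (Fin 3)) = 2 from by decide,
    show w0 ({0,2} : Finset (Fin 3)) = 2 from by decide,
    show w0 ({1,2} : Finset (Fin 3)) = 2 from by decide,
    show w0 ({0,1,2} : Finset (Fin 3)) = 1 from by decide]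
    ring

lemma Frec : ∀ (m : ℕ) (s : Finset (Fin 3)),
    F (m + 2) s = AP * F (m + 1) s - BP * F m s := by
  intro m
  induction m with
  | zero => exact Fbase
  | succ m ih =>
    intro s
    rw [show F (m + 3) s = ∑ T : Finset (Fin 3), (X : Polynomial ℤ) ^ (w2 s T) * F (m + 2) T
      from rfl]
    rw [Finset.sum_congr rfl (fun T _ => by rw [ih T])]
    have : ∑ T : Finset (Fin 3),
        (X : Polynomial ℤ) ^ (w2 s T) * (AP * F (m + 1) T - BP * F m T)
        = AP * (∑ T : Finset (Fin 3), (X : Polynomial ℤ) ^ (w2 s T) * F (m + 1) T)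
          - BP * (∑ T : Finset (Fin 3), (X : Polynomial ℤ) ^ (w2 s T) * F m T) := by
      rw [Finset.mul_sum, Finset.mul_sum, ← Finset.sum_sub_distrib]
      exact Finset.sum_congr rfl fun T _ => by ring
    rw [this]
    rfl

lemma tpoly_rec (m : ℕ) : tpoly (m + 3) = AP * tpoly (m + 2) - BP * tpoly (m + 1) := by
  rw [tpoly_F (m + 2), tpoly_F (m + 1), tpoly_F m,
    Finset.sum_congr rfl (fun T _ => by rw [Frec m T]),
    Finset.mul_sum, Finset.mul_sum, ← Finset.sum_sub_distrib]
  exact Finset.sum_congr rfl fun T _ => by ring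

lemma tpoly_one : tpoly 1 = 2 * X * (1 + 3 * X) := by
  rw [tpoly_F 0]
  simp only [F, sum_S3,
    show w2 (∅ : Finset (Fin 3)) ∅ = 0 from by decide,
    show w2 (∅ : Finset (Fin 3)) {0} = 1 from by decide,
    show w2 (∅ : Finset (Fin 3)) {1} = 1 from by decide,
    show w2 (∅ : Finset (Fin 3)) {2} = 1 from by decide,
    show w2 (∅ : Finset (Fin 3)) {0,1} = 1 from by decide,
    show w2 (∅ : Finset (Fin 3)) {0,2} = 1 from by decide,
    show w2 (∅ : Finset (Fin 3)) {1,2} = 1 from by decide,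
    show w2 (∅ : Finset (Fin 3)) {0,1,2} = 1 from by decide,
    show w2 ({0} : Finset (Fin 3)) ∅ = 0 from by decide,
    show w2 ({0} : Finset (Fin 3)) {0} = 0 from by decide,
    show w2 ({0} : Finset (Fin 3)) {1} = 1 from by decide,
    show w2 ({0} : Finset (Fin 3)) {2} = 1 from by decide,
    show w2 ({0} : Finset (Fin 3)) {0,1} = 0 from by decide,
    show w2 ({0} : Finset (Fin 3)) {0,2} = 0 from by decide,
    show w2 ({0} : Finset (Fin 3)) {1,2} = 2 from by decide,
    show w2 ({0} : Finset (Fin 3)) {0,1,2} = 0 from by decide,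
    show w2 ({1} : Finset (Fin 3)) ∅ = 0 from by decide,
    show w2 ({1} : Finset (Fin 3)) {0} = 1 from by decide,
    show w2 ({1} : Finset (Fin 3)) {1} = 0 from by decide,
    show w2 ({1} : Finset (Fin 3)) {2} = 1 from by decide,
    show w2 ({1} : Finset (Fin 3)) {0,1} = 0 from by decide,
    show w2 ({1} : Finset (Fin 3)) {0,2} = 2 from by decide,
    show w2 ({1} : Finset (Fin 3)) {1,2} = 0 from by decide,
    show w2 ({1} : Finset (Fin 3)) {0,1,2} = 0 from by decide,
    show w2 ({2} : Finset (Fin 3)) ∅ = 0 from by decide,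
    show w2 ({2} : Finset (Fin 3)) {0} = 1 from by decide,
    show w2 ({2} : Finset (Fin 3)) {1} = 1 from by decide,
    show w2 ({2} : Finset (Fin 3)) {2} = 0 from by decide,
    show w2 ({2} : Finset (Fin 3)) {0,1} = 2 from by decide,
    show w2 ({2} : Finset (Fin 3)) {0,2} = 0 from by decide,
    show w2 ({2} : Finset (Fin 3)) {1,2} = 0 from by decide,
    show w2 ({2} : Finset (Fin 3)) {0,1,2} = 0 from by decide,
    show w2 ({0,1} : Finset (Fin 3)) ∅ = 0 from by decide,
    show w2 ({0,1} : Finset (Fin 3)) {0} = 0 from by decide,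
    show w2 ({0,1} : Finset (Fin 3)) {1} = 0 from by decide,
    show w2 ({0,1} : Finset (Fin 3)) {2} = 2 from by decide,
    show w2 ({0,1} : Finset (Fin 3)) {0,1} = 0 from by decide,
    show w2 ({0,1} : Finset (Fin 3)) {0,2} = 1 from by decide,
    show w2 ({0,1} : Finset (Fin 3)) {1,2} = 1 from by decide,
    show w2 ({0,1} : Finset (Fin 3)) {0,1,2} = 0 from by decide,
    show w2 ({0,2} : Finset (Fin 3)) ∅ = 0 from by decide,
    show w2 ({0,2} : Finset (Fin 3)) {0} = 0 from by decide,
    show w2 ({0,2} : Finset (Fin 3)) {1} = 2 from by decide,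
    show w2 ({0,2} : Finset (Fin 3)) {2} = 0 from by decide,
    show w2 ({0,2} : Finset (Fin 3)) {0,1} = 1 from by decide,
    show w2 ({0,2} : Finset (Fin 3)) {0,2} = 0 from by decide,
    show w2 ({0,2} : Finset (Fin 3)) {1,2} = 1 from by decide,
    show w2 ({0,2} : Finset (Fin 3)) {0,1,2} = 0 from by decide,
    show w2 ({1,2} : Finset (Fin 3)) ∅ = 0 from by decide,
    show w2 ({1,2} : Finset (Fin 3)) {0} = 2 from by decide,
    show w2 ({1,2} : Finset (Fin 3)) {1} = 0 from by decide,
    show w2 ({1,2} : Finset (Fin 3)) {2} = 0 from by decide,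
    show w2 ({1,2} : Finset (Fin 3)) {0,1} = 1 from by decide,
    show w2 ({1,2} : Finset (Fin 3)) {0,2} = 1 from by decide,
    show w2 ({1,2} : Finset (Fin 3)) {1,2} = 0 from by decide,
    show w2 ({1,2} : Finset (Fin 3)) {0,1,2} = 0 from by decide,
    show w2 ({0,1,2} : Finset (Fin 3)) ∅ = 1 from by decide,
    show w2 ({0,1,2} : Finset (Fin 3)) {0} = 1 from by decide,
    show w2 ({0,1,2} : Finset (Fin 3)) {1} = 1 from by decide,
    show w2 ({0,1,2} : Finset (Fin 3)) {2} = 1 from by decide,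
    show w2 ({0,1,2} : Finset (Fin 3)) {0,1} = 1 from by decide,
    show w2 ({0,1,2} : Finset (Fin 3)) {0,2} = 1 from by decide,
    show w2 ({0,1,2} : Finset (Fin 3)) {1,2} = 1 from by decide,
    show w2 ({0,1,2} : Finset (Fin 3)) {0,1,2} = 0 from by decide,
    show w0 (∅ : Finset (Fin 3)) = 1 from by decide,
    show w0 ({0} : Finset (Fin 3)) = 2 from by decide,
    show w0 ({1} : Finset (Fin 3)) = 2 from by decide,
    show w0 ({2} : Finset (Fin 3)) = 2 from by decide,
    show w0 ({0,1} : Finset (Fin 3)) = 2 from by decide,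
    show w0 ({0,2} : Finset (Fin 3)) = 2 from by decide,
    show w0 ({1,2} : Finset (Fin 3)) = 2 from by decide,
    show w0 ({0,1,2} : Finset (Fin 3)) = 1 from by decide]
  ring

lemma tpoly_two : tpoly 2 = AP * tpoly 1 - 2 * X * (3 - 7 * X + 4 * X ^ 2) := by
  rw [tpoly_F 1, tpoly_one]
  simp only [F, sum_S3, AP,
    show w2 (∅ : Finset (Fin 3)) ∅ = 0 from by decide,
    show w2 (∅ : Finset (Fin 3)) {0} = 1 from by decide,
    show w2 (∅ : Finset (Fin 3)) {1} = 1 from by decide,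
    show w2 (∅ : Finset (Fin 3)) {2} = 1 from by decide,
    show w2 (∅ : Finset (Fin 3)) {0,1} = 1 from by decide,
    show w2 (∅ : Finset (Fin 3)) {0,2} = 1 from by decide,
    show w2 (∅ : Finset (Fin 3)) {1,2} = 1 from by decide,
    show w2 (∅ : Finset (Fin 3)) {0,1,2} = 1 from by decide,
    show w2 ({0} : Finset (Fin 3)) ∅ = 0 from by decide,
    show w2 ({0} : Finset (Fin 3)) {0} = 0 from by decide,
    show w2 ({0} : Finset (Fin 3)) {1} = 1 from by decide,
    show w2 ({0} : Finset (Fin 3)) {2} = 1 from by decide,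
    show w2 ({0} : Finset (Fin 3)) {0,1} = 0 from by decide,
    show w2 ({0} : Finset (Fin 3)) {0,2} = 0 from by decide,
    show w2 ({0} : Finset (Fin 3)) {1,2} = 2 from by decide,
    show w2 ({0} : Finset (Fin 3)) {0,1,2} = 0 from by decide,
    show w2 ({1} : Finset (Fin 3)) ∅ = 0 from by decide,
    show w2 ({1} : Finset (Fin 3)) {0} = 1 from by decide,
    show w2 ({1} : Finset (Fin 3)) {1} = 0 from by decide,
    show w2 ({1} : Finset (Fin 3)) {2} = 1 from by decide,
    show w2 ({1} : Finset (Fin 3)) {0,1} = 0 from by decide,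
    show w2 ({1} : Finset (Fin 3)) {0,2} = 2 from by decide,
    show w2 ({1} : Finset (Fin 3)) {1,2} = 0 from by decide,
    show w2 ({1} : Finset (Fin 3)) {0,1,2} = 0 from by decide,
    show w2 ({2} : Finset (Fin 3)) ∅ = 0 from by decide,
    show w2 ({2} : Finset (Fin 3)) {0} = 1 from by decide,
    show w2 ({2} : Finset (Fin 3)) {1} = 1 from by decide,
    show w2 ({2} : Finset (Fin 3)) {2} = 0 from by decide,
    show w2 ({2} : Finset (Fin 3)) {0,1} = 2 from by decide,
    show w2 ({2} : Finset (Fin 3)) {0,2} = 0 from by decide,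
    show w2 ({2} : Finset (Fin 3)) {1,2} = 0 from by decide,
    show w2 ({2} : Finset (Fin 3)) {0,1,2} = 0 from by decide,
    show w2 ({0,1} : Finset (Fin 3)) ∅ = 0 from by decide,
    show w2 ({0,1} : Finset (Fin 3)) {0} = 0 from by decide,
    show w2 ({0,1} : Finset (Fin 3)) {1} = 0 from by decide,
    show w2 ({0,1} : Finset (Fin 3)) {2} = 2 from by decide,
    show w2 ({0,1} : Finset (Fin 3)) {0,1} = 0 from by decide,
    show w2 ({0,1} : Finset (Fin 3)) {0,2} = 1 from by decide,
    show w2 ({0,1} : Finset (Fin 3)) {1,2} = 1 from by decide,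
    show w2 ({0,1} : Finset (Fin 3)) {0,1,2} = 0 from by decide,
    show w2 ({0,2} : Finset (Fin 3)) ∅ = 0 from by decide,
    show w2 ({0,2} : Finset (Fin 3)) {0} = 0 from by decide,
    show w2 ({0,2} : Finset (Fin 3)) {1} = 2 from by decide,
    show w2 ({0,2} : Finset (Fin 3)) {2} = 0 from by decide,
    show w2 ({0,2} : Finset (Fin 3)) {0,1} = 1 from by decide,
    show w2 ({0,2} : Finset (Fin 3)) {0,2} = 0 from by decide,
    show w2 ({0,2} : Finset (Fin 3)) {1,2} = 1 from by decide,
    show w2 ({0,2} : Finset (Fin 3)) {0,1,2} = 0 from by decide,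
    show w2 ({1,2} : Finset (Fin 3)) ∅ = 0 from by decide,
    show w2 ({1,2} : Finset (Fin 3)) {0} = 2 from by decide,
    show w2 ({1,2} : Finset (Fin 3)) {1} = 0 from by decide,
    show w2 ({1,2} : Finset (Fin 3)) {2} = 0 from by decide,
    show w2 ({1,2} : Finset (Fin 3)) {0,1} = 1 from by decide,
    show w2 ({1,2} : Finset (Fin 3)) {0,2} = 1 from by decide,
    show w2 ({1,2} : Finset (Fin 3)) {1,2} = 0 from by decide,
    show w2 ({1,2} : Finset (Fin 3)) {0,1,2} = 0 from by decide,
    show w2 ({0,1,2} : Finset (Fin 3)) ∅ = 1 from by decide,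
    show w2 ({0,1,2} : Finset (Fin 3)) {0} = 1 from by decide,
    show w2 ({0,1,2} : Finset (Fin 3)) {1} = 1 from by decide,
    show w2 ({0,1,2} : Finset (Fin 3)) {2} = 1 from by decide,
    show w2 ({0,1,2} : Finset (Fin 3)) {0,1} = 1 from by decide,
    show w2 ({0,1,2} : Finset (Fin 3)) {0,2} = 1 from by decide,
    show w2 ({0,1,2} : Finset (Fin 3)) {1,2} = 1 from by decide,
    show w2 ({0,1,2} : Finset (Fin 3)) {0,1,2} = 0 from by decide,
    show w0 (∅ : Finset (Fin 3)) = 1 from by decide,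
    show w0 ({0} : Finset (Fin 3)) = 2 from by decide,
    show w0 ({1} : Finset (Fin 3)) = 2 from by decide,
    show w0 ({2} : Finset (Fin 3)) = 2 from by decide,
    show w0 ({0,1} : Finset (Fin 3)) = 2 from by decide,
    show w0 ({0,2} : Finset (Fin 3)) = 2 from by decide,
    show w0 ({1,2} : Finset (Fin 3)) = 2 from by decide,
    show w0 ({0,1,2} : Finset (Fin 3)) = 1 from by decide]
  ring

end Final
end K3P


open K3P

/-- `(1 - (4 + 3y + y²)x + (3 - 7y + 3y² + y³)x²) · T(x,y)
      = 2y(1 + 3y)·x - 2y(3 - 7y + 4y²)·x²`. -/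
theorem genfun_K3_times_path :
    (1 - PowerSeries.C (R := Polynomial ℤ) (4 + 3 * Polynomial.X + Polynomial.X ^ 2) * PowerSeries.X
        + PowerSeries.C (R := Polynomial ℤ) (3 - 7 * Polynomial.X + 3 * Polynomial.X ^ 2
            + Polynomial.X ^ 3) * PowerSeries.X ^ 2) * Tser
      = PowerSeries.C (R := Polynomial ℤ) (2 * Polynomial.X * (1 + 3 * Polynomial.X)) * PowerSeries.X
        - PowerSeries.C (R := Polynomial ℤ) (2 * Polynomial.X * (3 - 7 * Polynomial.X
            + 4 * Polynomial.X ^ 2)) * PowerSeries.X ^ 2 := by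
  rw [show (4 + 3 * Polynomial.X + Polynomial.X ^ 2 : Polynomial ℤ) = AP from rfl,
    show (3 - 7 * Polynomial.X + 3 * Polynomial.X ^ 2 + Polynomial.X ^ 3 : Polynomial ℤ)
      = BP from rfl]
  have hT0 : (PowerSeries.coeff (R := Polynomial ℤ) 0) Tser = 0 := by
    simp [Tser, PowerSeries.coeff_mk]
  have hXT : ∀ k, (PowerSeries.coeff (R := Polynomial ℤ) k) (PowerSeries.X * Tser)
      = (PowerSeries.coeff (R := Polynomial ℤ) (k - 1)) Tser := by
    intro k
    cases k with
    | zero => rw [PowerSeries.coeff_zero_X_mul]; exact hT0.symm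
    | succ j => rw [PowerSeries.coeff_succ_X_mul]; simp
  have hXXT : ∀ k, (PowerSeries.coeff (R := Polynomial ℤ) k)
        (PowerSeries.X * (PowerSeries.X * Tser))
      = (PowerSeries.coeff (R := Polynomial ℤ) (k - 2)) Tser := by
    intro k
    cases k with
    | zero => rw [PowerSeries.coeff_zero_X_mul]; exact hT0.symm
    | succ j =>
      rw [PowerSeries.coeff_succ_X_mul, hXT]
      congr 2
  refine PowerSeries.ext fun k => ?_
  rw [add_mul, sub_mul, one_mul, map_add, map_sub, map_sub, mul_assoc, PowerSeries.coeff_C_mul,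
    hXT, mul_assoc, PowerSeries.coeff_C_mul,
    show (PowerSeries.X ^ 2 * Tser : PowerSeries (Polynomial ℤ))
      = PowerSeries.X * (PowerSeries.X * Tser) from by rw [pow_two, mul_assoc],
    hXXT, PowerSeries.coeff_C_mul, PowerSeries.coeff_C_mul, PowerSeries.coeff_X,
    PowerSeries.coeff_X_pow]
  rcases k with _ | _ | _ | m
  · simp [Tser, PowerSeries.coeff_mk]
  · norm_num [Tser, PowerSeries.coeff_mk]
    rw [tpoly_one]
  · norm_num [Tser, PowerSeries.coeff_mk]
    rw [tpoly_two]
    ring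
  · have h1 : m + 1 + 1 + 1 - 1 = m + 2 := by omega
    have h2 : m + 1 + 1 + 1 - 2 = m + 1 := by omega
    have h3 : m + 1 + 1 + 1 = m + 3 := by omega
    rw [h1, h2, h3, if_neg (show ¬(m + 3 = 1) from by omega),
      if_neg (show ¬(m + 3 = 2) from by omega)]
    simp only [Tser, PowerSeries.coeff_mk, if_neg (show ¬(m + 3 = 0) from by omega),
      if_neg (show ¬(m + 2 = 0) from by omega), if_neg (show ¬(m + 1 = 0) from by omega)]
    rw [tpoly_rec]
    ring
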